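/- Let N ≥ 1, and let ζ = exp(2πi/N). Suppose A and B are elements of SU(N) satisfying A B A⁻¹ B⁻¹ = ζ·1. Then every N×N complex matrix X satisfying X A = A X and X B = B X is a scalar multiple of the identity matrix. In particular, every C ∈ SU(N) commuting with both A and B is of the form ζ^k·1 for some integer k with 0 ≤ k ≤ N−1, so there are exactly N such matrices C. -/

import Mathlib

open Matrix Module

theorem commutant_of_clock_shift_pair_is_center
    (N : ℕ) (hN : 1 ≤ N)
    (ζ : ℂ) (hζ : ζ = Complex.exp (2 * (Real.pi : ℂ) * Complex.I / (N : ℂ)))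
    (A B : Matrix (Fin N) (Fin N) ℂ)
    (hA : A ∈ Matrix.specialUnitaryGroup (Fin N) ℂ)
    (hB : B ∈ Matrix.specialUnitaryGroup (Fin N) ℂ)
    (hcomm : A * B * A⁻¹ * B⁻¹ = ζ • (1 : Matrix (Fin N) (Fin N) ℂ)) :
    (∀ X : Matrix (Fin N) (Fin N) ℂ, X * A = A * X → X * B = B * X →
      ∃ c : ℂ, X = c • (1 : Matrix (Fin N) (Fin N) ℂ))
    ∧ (∀ C : Matrix (Fin N) (Fin N) ℂ, C ∈ Matrix.specialUnitaryGroup (Fin N) ℂ →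
        C * A = A * C → C * B = B * C →
        ∃ k : ℕ, k ≤ N - 1 ∧ C = ζ ^ k • (1 : Matrix (Fin N) (Fin N) ℂ))
    ∧ {C : Matrix (Fin N) (Fin N) ℂ |
        C ∈ Matrix.specialUnitaryGroup (Fin N) ℂ ∧ C * A = A * C ∧ C * B = B * C}.ncard = N := by
  haveI : NeZero N := ⟨by omega⟩
  have hNne : N ≠ 0 := by omega
  haveI : Nonempty (Fin N) := ⟨⟨0, by omega⟩⟩
  have hprim : IsPrimitiveRoot ζ N := hζ ▸ Complex.isPrimitiveRoot_exp N hNne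
  have hζN : ζ ^ N = 1 := hprim.pow_eq_one
  have hdetA : A.det = 1 := (Matrix.mem_specialUnitaryGroup_iff.mp hA).2
  have hdetB : B.det = 1 := (Matrix.mem_specialUnitaryGroup_iff.mp hB).2
  have hAu : IsUnit A.det := by rw [hdetA]; exact isUnit_one
  have hBu : IsUnit B.det := by rw [hdetB]; exact isUnit_one
  -- the commutation relation
  have hAB : A * B = ζ • (B * A) := by
    have h := congrArg (fun M => M * (B * A)) hcomm
    simp only [Matrix.mul_assoc] at h
    rw [Matrix.nonsing_inv_mul_cancel_left _ _ hBu, Matrix.nonsing_inv_mul _ hAu,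
      Matrix.mul_one, Matrix.smul_mul, Matrix.one_mul] at h
    exact h
  -- pass to endomorphisms
  set e := Matrix.toLinAlgEquiv' (R := ℂ) (n := Fin N) with he
  set a := e A with ha
  set b := e B with hb
  have hainj : Function.Injective a := by
    have h1 : e A⁻¹ * a = 1 := by rw [ha, ← _root_.map_mul, Matrix.nonsing_inv_mul _ hAu, _root_.map_one]
    intro u w huw
    have := congrArg (e A⁻¹) huw
    rwa [← Module.End.mul_apply, ← Module.End.mul_apply, h1, Module.End.one_apply,
      Module.End.one_apply] at this
  have hbinj : Function.Injective b := by
    have h1 : e B⁻¹ * b = 1 := by rw [hb, ← _root_.map_mul, Matrix.nonsing_inv_mul _ hBu, _root_.map_one]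
    intro u w huw
    have := congrArg (e B⁻¹) huw
    rwa [← Module.End.mul_apply, ← Module.End.mul_apply, h1, Module.End.one_apply,
      Module.End.one_apply] at this
  have hab : ∀ u, a (b u) = ζ • b (a u) := by
    intro u
    have h : a * b = ζ • (b * a) := by
      rw [ha, hb, ← _root_.map_mul, ← _root_.map_mul, ← _root_.map_smul, hAB]
    have := DFunLike.congr_fun h u
    simpa [Module.End.mul_apply] using this
  -- eigenvector of a
  obtain ⟨μ₀, hμ₀⟩ := Module.End.exists_eigenvalue a
  obtain ⟨v, hv⟩ := hμ₀.exists_hasEigenvector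
  have hv0 : v ≠ 0 := hv.right
  have hav : a v = μ₀ • v := hv.apply_eq_smul
  have hμ0 : μ₀ ≠ 0 := by
    intro h
    apply hv0
    apply hainj
    rw [hav, h, zero_smul, _root_.map_zero]
  -- the eigenbasis
  set w : Fin N → (Fin N → ℂ) := fun k => (b ^ (k : ℕ)) v with hwdef
  have hbpow : ∀ (k : ℕ), a ((b ^ k) v) = (ζ ^ k * μ₀) • (b ^ k) v := by
    intro k
    induction k with
    | zero => simpa using hav
    | succ n ih =>
      rw [pow_succ', Module.End.mul_apply, hab, ih, _root_.map_smul, smul_smul, ← Module.End.mul_apply,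
        ← pow_succ']
      ring_nf
  have hbpow_inj : ∀ k : ℕ, Function.Injective (b ^ k) := by
    intro k
    induction k with
    | zero => rw [pow_zero]; exact fun u w h => h
    | succ n ih =>
      rw [pow_succ']
      intro u w h
      exact ih (hbinj h)
  have hw : ∀ k : Fin N, Module.End.HasEigenvector a (ζ ^ (k : ℕ) * μ₀) (w k) := by
    intro k
    constructor
    · rw [Module.End.mem_eigenspace_iff]
      exact hbpow k
    · intro h0
      exact hv0 (hbpow_inj k (by simpa using h0))
  have hμinj : Function.Injective (fun k : Fin N => ζ ^ (k : ℕ) * μ₀) := by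
    intro j k h
    simp only at h
    have hjk : ζ ^ (j : ℕ) = ζ ^ (k : ℕ) := mul_right_cancel₀ hμ0 h
    exact Fin.ext (hprim.pow_inj j.isLt k.isLt hjk)
  have li : LinearIndependent ℂ w := Module.End.eigenvectors_linearIndependent' a _ hμinj w hw
  have hcard : Fintype.card (Fin N) = finrank ℂ (Fin N → ℂ) := by simp
  set 𝒷 := basisOfLinearIndependentOfCardEqFinrank li hcard with h𝒷def
  have h𝒷 : ⇑𝒷 = w := coe_basisOfLinearIndependentOfCardEqFinrank li hcard
  -- Part 1
  have key : ∀ X : Matrix (Fin N) (Fin N) ℂ, X * A = A * X → X * B = B * X →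
      ∃ c : ℂ, X = c • (1 : Matrix (Fin N) (Fin N) ℂ) := by
    intro X hXA hXB
    set x := e X with hx
    have hxa : ∀ u, x (a u) = a (x u) := by
      intro u
      have h : x * a = a * x := by rw [hx, ha, ← _root_.map_mul, ← _root_.map_mul, hXA]
      simpa [Module.End.mul_apply] using DFunLike.congr_fun h u
    have hxb : ∀ u, x (b u) = b (x u) := by
      intro u
      have h : x * b = b * x := by rw [hx, hb, ← _root_.map_mul, ← _root_.map_mul, hXB]
      simpa [Module.End.mul_apply] using DFunLike.congr_fun h u
    have haxv : a (x v) = μ₀ • x v := by rw [← hxa, hav, _root_.map_smul]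
    set c := 𝒷.repr (x v) with hc
    have hrepr : x v = ∑ k : Fin N, c k • w k := by
      conv_lhs => rw [← 𝒷.sum_repr (x v)]
      simp [h𝒷, hc]
    have hcoef : ∀ k : Fin N, (ζ ^ (k : ℕ) * μ₀ * c k - μ₀ * c k) = 0 := by
      have hsum : ∑ k : Fin N, (ζ ^ (k : ℕ) * μ₀ * c k - μ₀ * c k) • w k = 0 := by
        have h1 : a (x v) = ∑ k : Fin N, (ζ ^ (k : ℕ) * μ₀ * c k) • w k := by
          rw [hrepr, _root_.map_sum]
          refine Finset.sum_congr rfl fun k _ => ?_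
          rw [_root_.map_smul, hwdef]
          simp only
          rw [hbpow (k : ℕ), smul_smul]
          ring_nf
        have h2 : a (x v) = ∑ k : Fin N, (μ₀ * c k) • w k := by
          rw [haxv, hrepr, Finset.smul_sum]
          refine Finset.sum_congr rfl fun k _ => ?_
          rw [smul_smul]
        calc ∑ k : Fin N, (ζ ^ (k : ℕ) * μ₀ * c k - μ₀ * c k) • w k
            = (∑ k : Fin N, (ζ ^ (k : ℕ) * μ₀ * c k) • w k) - ∑ k : Fin N, (μ₀ * c k) • w k := by
              rw [← Finset.sum_sub_distrib]
              refine Finset.sum_congr rfl fun k _ => ?_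
              rw [sub_smul]
          _ = a (x v) - a (x v) := by rw [← h1, ← h2]
          _ = 0 := sub_self _
      exact fun k => Fintype.linearIndependent_iff.mp li _ hsum k
    have hck : ∀ k : Fin N, k ≠ 0 → c k = 0 := by
      intro k hk
      have h := hcoef k
      have hfac : (ζ ^ (k : ℕ) - 1) * (μ₀ * c k) = 0 := by ring_nf; ring_nf at h; linear_combination h
      rcases mul_eq_zero.mp hfac with h1 | h2
      · exfalso
        have : ζ ^ (k : ℕ) = 1 := sub_eq_zero.mp h1
        have hdvd : N ∣ (k : ℕ) := hprim.dvd_of_pow_eq_one _ this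
        have : (k : ℕ) = 0 := Nat.eq_zero_of_dvd_of_lt hdvd k.isLt
        exact hk (Fin.ext this)
      · rcases mul_eq_zero.mp h2 with h3 | h4
        · exact absurd h3 hμ0
        · exact h4
    have hxv : x v = c 0 • v := by
      rw [hrepr, Fintype.sum_eq_single 0 (fun k hk => by rw [hck k hk, zero_smul])]
      simp [hwdef]
    refine ⟨c 0, ?_⟩
    have hxend : x = c 0 • (1 : Module.End ℂ (Fin N → ℂ)) := by
      apply 𝒷.ext
      intro k
      rw [h𝒷, hwdef]
      simp only [LinearMap.smul_apply, Module.End.one_apply]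
      calc x ((b ^ (k : ℕ)) v) = (b ^ (k : ℕ)) (x v) := by
            induction (k : ℕ) with
            | zero => simp
            | succ n ih => rw [pow_succ', Module.End.mul_apply, Module.End.mul_apply, hxb, ih]
        _ = c 0 • (b ^ (k : ℕ)) v := by rw [hxv, _root_.map_smul]
    apply e.injective
    rw [← hx, hxend, _root_.map_smul, _root_.map_one]
  refine ⟨key, ?_, ?_⟩
  -- Part 2
  · intro C hC hCA hCB
    obtain ⟨c, hc⟩ := key C hCA hCB
    have hdetC : C.det = 1 := (Matrix.mem_specialUnitaryGroup_iff.mp hC).2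
    have hcN : c ^ N = 1 := by
      rw [hc] at hdetC
      rwa [Matrix.det_smul, Matrix.det_one, mul_one, Fintype.card_fin] at hdetC
    obtain ⟨i, hiN, hi⟩ := hprim.eq_pow_of_pow_eq_one hcN
    exact ⟨i, by omega, by rw [hi, hc]⟩
  -- Part 3
  · have habs : ζ * (starRingEnd ℂ) ζ = 1 := by
      have h1 : ‖ζ‖ ^ N = 1 := by rw [← norm_pow, hζN, norm_one]
      have h2 : ‖ζ‖ = 1 := by
        have := (pow_left_inj₀ (norm_nonneg ζ) zero_le_one hNne).mp (by rw [h1, one_pow])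
        exact this
      rw [Complex.mul_conj]
      norm_cast
      rw [Complex.normSq_eq_norm_sq, h2, one_pow]
    have memSU : ∀ k : ℕ,
        (ζ ^ k • (1 : Matrix (Fin N) (Fin N) ℂ)) ∈ Matrix.specialUnitaryGroup (Fin N) ℂ := by
      intro k
      rw [Matrix.mem_specialUnitaryGroup_iff]
      constructor
      · rw [Matrix.mem_unitaryGroup_iff]
        have : star (ζ ^ k • (1 : Matrix (Fin N) (Fin N) ℂ))
            = (starRingEnd ℂ) (ζ ^ k) • (1 : Matrix (Fin N) (Fin N) ℂ) := by
          rw [star_smul, star_one]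
          rfl
        rw [this, Matrix.smul_mul, Matrix.mul_smul, Matrix.one_mul, smul_smul, _root_.map_pow,
          ← mul_pow, habs, one_pow, one_smul]
      · rw [Matrix.det_smul, Matrix.det_one, mul_one, Fintype.card_fin, ← pow_mul, mul_comm k N,
          pow_mul, hζN, one_pow]
    have hinjrange : Function.Injective (fun k : Fin N => ζ ^ (k : ℕ) • (1 : Matrix (Fin N) (Fin N) ℂ)) := by
      intro j k h
      simp only at h
      have h0 := congrArg (fun M => M ⟨0, by omega⟩ ⟨0, by omega⟩) h
      simp only [Matrix.smul_apply, Matrix.one_apply_eq, smul_eq_mul, mul_one] at h0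
      exact Fin.ext (hprim.pow_inj j.isLt k.isLt h0)
    have hSeq : {C : Matrix (Fin N) (Fin N) ℂ |
        C ∈ Matrix.specialUnitaryGroup (Fin N) ℂ ∧ C * A = A * C ∧ C * B = B * C}
        = Set.range (fun k : Fin N => ζ ^ (k : ℕ) • (1 : Matrix (Fin N) (Fin N) ℂ)) := by
      ext C
      constructor
      · rintro ⟨hC, hCA, hCB⟩
        obtain ⟨c, hc⟩ := key C hCA hCB
        have hdetC : C.det = 1 := (Matrix.mem_specialUnitaryGroup_iff.mp hC).2
        have hcN : c ^ N = 1 := by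
          rw [hc] at hdetC
          rwa [Matrix.det_smul, Matrix.det_one, mul_one, Fintype.card_fin] at hdetC
        obtain ⟨i, hiN, hi⟩ := hprim.eq_pow_of_pow_eq_one hcN
        refine ⟨⟨i, hiN⟩, ?_⟩
        show (ζ ^ i • 1 : Matrix (Fin N) (Fin N) ℂ) = C
        rw [hi]
        exact hc.symm
      · rintro ⟨k, rfl⟩
        exact ⟨memSU k, by rw [Matrix.smul_mul, Matrix.mul_smul, Matrix.one_mul, Matrix.mul_one],
          by rw [Matrix.smul_mul, Matrix.mul_smul, Matrix.one_mul, Matrix.mul_one]⟩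
    rw [hSeq, ← Set.image_univ, Set.ncard_image_of_injective _ hinjrange, Set.ncard_univ]
    simp
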